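/- Let A and B be complex Banach algebras, s a fixed nonzero complex number with |s| < 1, r > 2 a real number, and θ ≥ 0. Suppose f : A³ → B satisfies f(x, 0, a) = f(0, z, a) = f(x, z, 0) = 0 for all x, z, a ∈ A and, for all λ, μ, η ∈ T¹ and all x, y, z, w, a, b ∈ A, ‖f(λ(x+y), μ(z−w), η(a+b)) + f(λ(x−y), μ(z+w), η(a−b)) − λμη(2f(x,z,a) − 2f(x,w,b) + 2f(y,z,b) − 2f(y,w,a))‖ ≤ ‖s · D₂f(x, y, z, w, a, b)‖ + θ(‖x‖^r + ‖y‖^r)(‖z‖^r + ‖w‖^r)(‖a‖^r + ‖b‖^r). Then there exists a unique ℂ-trilinear mapping H : A³ → B such that ‖f(x, z, a) − H(x, z, a)‖ ≤ (2θ/(2^r − 2)) ‖x‖^r ‖z‖^r ‖a‖^r for all x, z, a ∈ A. If, in addition, f satisfies ‖f(x_{σ(1)}, x_{σ(2)}, x_{σ(3)}) − f(x₁, x₂, x₃)‖ ≤ θ ‖x₁‖^r ‖x₂‖^r ‖x₃‖^r for all x₁, x₂, x₃ ∈ A and every permutation (σ(1), σ(2), σ(3)) of (1,2,3), and ‖f(xy,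 zw, ab) − f(x, z, a)f(y, w, b)‖ ≤ θ(‖x‖^r + ‖y‖^r)(‖z‖^r + ‖w‖^r)(‖a‖^r + ‖b‖^r) for all x, y, z, w, a, b ∈ A, then H is a permuting trihomomorphism. -/

import Mathlib

private lemma pow_inv_rpow (r : ℝ) (n : ℕ) : (((2:ℝ)^n)⁻¹) ^ r = (((2:ℝ)^r)⁻¹)^n := by
  have h2 : (0:ℝ) < 2 := two_pos
  have l1 : ((2:ℝ)^n)⁻¹ = (2:ℝ) ^ (-(n:ℝ)) := by
    rw [Real.rpow_neg h2.le, Real.rpow_natCast]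
  have l2 : ((2:ℝ)^r)⁻¹ = (2:ℝ) ^ (-r) := by rw [Real.rpow_neg h2.le]
  rw [l1, l2, ← Real.rpow_natCast ((2:ℝ)^(-r)) n, ← Real.rpow_mul h2.le, ← Real.rpow_mul h2.le]
  ring_nf

private lemma aux_chom {X Y : Type*} [AddCommGroup X] [Module ℂ X] [AddCommGroup Y] [Module ℂ Y]
    (g : X → Y) (hadd : ∀ u v, g (u + v) = g u + g v)
    (hT : ∀ l : ℂ, ‖l‖ = 1 → ∀ u, g (l • u) = l • g u) :
    ∀ (c : ℂ) (u : X), g (c • u) = c • g u := by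
  have h0 : g 0 = 0 := by have := hadd 0 0; simpa using this.symm
  have hhalf : ∀ y z : Y, y + y = z + z → y = z := by
    intro y z h
    have h2 : (2:ℂ) • y = (2:ℂ) • z := by rw [two_smul, two_smul]; exact h
    exact smul_right_injective Y (two_ne_zero (α := ℂ)) h2
  have hnat : ∀ (n : ℕ) (u : X), g ((n : ℂ) • u) = (n : ℂ) • g u := by
    intro n
    induction n with
    | zero => intro u; simpa using h0
    | succ k ih =>
      intro u
      push_cast
      rw [add_smul, add_smul, one_smul, one_smul, hadd, ih]
  have hsmall : ∀ c : ℂ, ‖c‖ ≤ 1 → ∀ u, g (c • u) = c • g u := by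
    intro c hc u
    rcases eq_or_ne c 0 with rfl | hc0
    · simpa using h0
    · have hcn : (0:ℝ) < ‖c‖ := norm_pos_iff.mpr hc0
      have habs : ‖c‖ ≠ 0 := hcn.ne'
      have habs' : ((‖c‖ : ℝ) : ℂ) ≠ 0 := by exact_mod_cast habs
      set t : ℝ := Real.sqrt (1 - ‖c‖^2) with ht
      have ht2 : t^2 = 1 - ‖c‖^2 := Real.sq_sqrt (by nlinarith [norm_nonneg c])
      set v : ℂ := (‖c‖ : ℂ) + (t:ℂ) * Complex.I with hv
      have hvnorm : ‖v‖ = 1 := by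
        rw [hv, Complex.norm_add_mul_I, ht2,
          show ‖c‖^2 + (1 - ‖c‖^2) = 1 by ring, Real.sqrt_one]
      set l₁ : ℂ := c * v / (‖c‖ : ℂ) with hl₁
      set l₂ : ℂ := c * (starRingEnd ℂ v) / (‖c‖ : ℂ) with hl₂
      have hl₁n : ‖l₁‖ = 1 := by
        rw [hl₁, norm_div, norm_mul, hvnorm]
        simp
        exact hc0
      have hl₂n : ‖l₂‖ = 1 := by
        rw [hl₂, norm_div, norm_mul, RCLike.norm_conj, hvnorm]
        simp
        exact hc0
      have hsum : l₁ + l₂ = 2 * c := by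
        rw [hl₁, hl₂, ← add_div, hv, map_add, map_mul, Complex.conj_I]
        push_cast
        field_simp
        simp only [Complex.conj_ofReal]
        ring
      have key : g (c • u) + g (c • u) = c • g u + c • g u := by
        calc g (c•u) + g (c•u) = g (c•u + c•u) := (hadd _ _).symm
          _ = g (l₁ • u + l₂ • u) := by rw [← add_smul, ← two_mul, ← hsum, add_smul]
          _ = l₁ • g u + l₂ • g u := by rw [hadd, hT l₁ hl₁n, hT l₂ hl₂n]
          _ = c • g u + c • g u := by rw [← add_smul, hsum, two_mul, add_smul]
      exact hhalf _ _ key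
  intro c u
  rcases eq_or_ne c 0 with rfl | hc0
  · simpa using h0
  · obtain ⟨n, hn1, hn2⟩ : ∃ n : ℕ, ‖c‖ ≤ n ∧ 0 < n := ⟨⌈‖c‖⌉₊ + 1, by
      push_cast; have := Nat.le_ceil ‖c‖; constructor <;> [linarith; positivity]⟩
    have hnne : ((n:ℂ)) ≠ 0 := by exact_mod_cast hn2.ne'
    have e : g (c • u) = g ((n:ℂ) • ((c / n) • u)) := by
      rw [smul_smul, mul_div_cancel₀ _ hnne]
    rw [e, hnat, hsmall (c / n) (by
      rw [norm_div, div_le_one (by exact_mod_cast hn2)]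
      simpa using hn1), smul_smul, mul_div_cancel₀ _ hnne]

/-- A mapping `f : X³ → Y` is *tri-additive* if it is additive in each variable. -/
def TriAdditive {X Y : Type*} [AddCommGroup X] [AddCommGroup Y]
    (f : X → X → X → Y) : Prop :=
  (∀ x x' z a : X, f (x + x') z a = f x z a + f x' z a) ∧
  (∀ x z z' a : X, f x (z + z') a = f x z a + f x z' a) ∧
  (∀ x z a a' : X, f x z (a + a') = f x z a + f x z a')

/-- A mapping `f : X³ → Y` is *ℂ-trilinear* if it is ℂ-linear in each variable. -/
def CTrilinear {X Y : Type*} [AddCommGroup X] [Module ℂ X] [AddCommGroup Y] [Module ℂ Y]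
    (f : X → X → X → Y) : Prop :=
  TriAdditive f ∧
  (∀ (c : ℂ) (x z a : X), f (c • x) z a = c • f x z a) ∧
  (∀ (c : ℂ) (x z a : X), f x (c • z) a = c • f x z a) ∧
  (∀ (c : ℂ) (x z a : X), f x z (c • a) = c • f x z a)

/-- `D₁f(x, y, z, w, a, b)`. -/
def D₁ {X Y : Type*} [AddCommGroup X] [Module ℂ X] [AddCommGroup Y] [Module ℂ Y]
    (f : X → X → X → Y) (x y z w a b : X) : Y :=
  f (x + y) (z - w) (a + b) + f (x - y) (z + w) (a - b)
    - (2 : ℂ) • f x z a + (2 : ℂ) • f x w b - (2 : ℂ) • f y z b + (2 : ℂ) • f y w a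

/-- `D₂f(x, y, z, w, a, b)`. -/
noncomputable def D₂ {X Y : Type*} [AddCommGroup X] [Module ℂ X] [AddCommGroup Y] [Module ℂ Y]
    (f : X → X → X → Y) (x y z w a b : X) : Y :=
  (2 : ℂ) • f ((2 : ℂ)⁻¹ • (x + y)) (z - w) (a + b)
    + (2 : ℂ) • f ((2 : ℂ)⁻¹ • (x - y)) (z + w) (a - b)
    - (2 : ℂ) • f x z a + (2 : ℂ) • f x w b - (2 : ℂ) • f y z b + (2 : ℂ) • f y w a


/-- A ℂ-trilinear `H : A³ → B` is a *permuting trihomomorphism* if it is multiplicative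
and is invariant under every permutation of its three variables. -/
def PermutingTrihomomorphism {A B : Type*} [Ring A] [Module ℂ A] [Ring B] [Module ℂ B]
    (H : A → A → A → B) : Prop :=
  CTrilinear H ∧
  (∀ x y z w a b : A, H (x * y) (z * w) (a * b) = H x z a * H y w b) ∧
  (∀ (σ : Equiv.Perm (Fin 3)) (x : Fin 3 → A),
    H (x (σ 0)) (x (σ 1)) (x (σ 2)) = H (x 0) (x 1) (x 2))

variable {A B : Type*} [NormedRing A] [NormedAlgebra ℂ A] [CompleteSpace A]
  [NormedRing B] [NormedAlgebra ℂ B] [CompleteSpace B]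

set_option maxHeartbeats 2000000 in
theorem stmt_15 (s : ℂ) (hs0 : s ≠ 0) (hs1 : ‖s‖ < 1) (r θ : ℝ) (hr : 2 < r) (hθ : 0 ≤ θ)
    (f : A → A → A → B)
    (hzero : ∀ x z a : A, f x 0 a = 0 ∧ f 0 z a = 0 ∧ f x z 0 = 0)
    (hineq : ∀ l m e : ℂ, ‖l‖ = 1 → ‖m‖ = 1 → ‖e‖ = 1 → ∀ x y z w a b : A,
      ‖f (l • (x + y)) (m • (z - w)) (e • (a + b))
          + f (l • (x - y)) (m • (z + w)) (e • (a - b))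
          - (l * m * e) • ((2 : ℂ) • f x z a - (2 : ℂ) • f x w b
              + (2 : ℂ) • f y z b - (2 : ℂ) • f y w a)‖
        ≤ ‖s • D₂ f x y z w a b‖ + θ * (‖x‖ ^ r + ‖y‖ ^ r) * (‖z‖ ^ r + ‖w‖ ^ r) * (‖a‖ ^ r + ‖b‖ ^ r)) :
    (∃! H : A → A → A → B, CTrilinear H ∧
      ∀ x z a : A, ‖f x z a - H x z a‖ ≤ 2 * θ / ((2 : ℝ) ^ r - 2) * (‖x‖ ^ r * ‖z‖ ^ r * ‖a‖ ^ r)) ∧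
    ((∀ (σ : Equiv.Perm (Fin 3)) (x : Fin 3 → A),
      ‖f (x (σ 0)) (x (σ 1)) (x (σ 2)) - f (x 0) (x 1) (x 2)‖
        ≤ θ * ‖x 0‖ ^ r * ‖x 1‖ ^ r * ‖x 2‖ ^ r) →
     (∀ x y z w a b : A,
      ‖f (x * y) (z * w) (a * b) - f x z a * f y w b‖
        ≤ θ * (‖x‖ ^ r + ‖y‖ ^ r) * (‖z‖ ^ r + ‖w‖ ^ r) * (‖a‖ ^ r + ‖b‖ ^ r)) →
     ∀ H : A → A → A → B,
       (CTrilinear H ∧ ∀ x z a : A, ‖f x z a - H x z a‖ ≤ 2 * θ / ((2 : ℝ) ^ r - 2) * (‖x‖ ^ r * ‖z‖ ^ r * ‖a‖ ^ r)) →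
       PermutingTrihomomorphism H) := by
  have hf0₂ : ∀ (x a : A), f x 0 a = 0 := fun x a => (hzero x 0 a).1
  have hf0₁ : ∀ (z a : A), f 0 z a = 0 := fun z a => (hzero 0 z a).2.1
  have hf0₃ : ∀ (x z : A), f x z 0 = 0 := fun x z => (hzero x z 0).2.2
  have h2 : (0:ℝ) < 2 := two_pos
  have hr0 : r ≠ 0 := by intro h; rw [h] at hr; linarith
  have hrpos : (0:ℝ) < r := by linarith
  have h2r : (0:ℝ) < (2:ℝ)^r := Real.rpow_pos_of_pos h2 r
  have h22 : (2:ℝ) ^ (2:ℝ) = 4 := by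
    have h := Real.rpow_natCast (2:ℝ) 2
    push_cast at h
    rw [h]
    norm_num
  have h2r4 : (4:ℝ) < (2:ℝ)^r := by
    have := (Real.rpow_lt_rpow_left_iff (x := (2:ℝ)) one_lt_two).mpr hr
    rwa [h22] at this
  have hden : (0:ℝ) < (2:ℝ)^r - 2 := by linarith
  have hnorm2 : ‖(2:ℂ)‖ = 2 := by norm_num
  have h0r : (0:ℝ)^r = 0 := Real.zero_rpow hr0
  set g : ℝ := ((2:ℝ)^r)⁻¹ with hg
  have hg0 : 0 < g := by rw [hg]; positivity
  have hginv : g * (2:ℝ)^r = 1 := by rw [hg]; exact inv_mul_cancel₀ h2r.ne'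
  have hg4 : g < 4⁻¹ := by
    rw [hg]
    rw [inv_lt_inv₀ h2r (by norm_num : (0:ℝ) < 4)]
    exact h2r4
  have hg1 : g < 1 := by
    have : (4:ℝ)⁻¹ < 1 := by norm_num
    linarith
  set q : ℝ := 2 * g with hqdef
  have hq0 : (0:ℝ) ≤ q := by rw [hqdef]; positivity
  have hq1 : q < 1 := by
    rw [hqdef, hg, ← div_eq_mul_inv, div_lt_one h2r]
    linarith
  have htn : ∀ (n:ℕ), ‖((2:ℂ)^n)⁻¹‖ = ((2:ℝ)^n)⁻¹ := by
    intro n; rw [norm_inv, norm_pow, hnorm2]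
  have hsc : ∀ (n:ℕ) (x : A), ‖((2:ℂ)^n)⁻¹ • x‖ ^ r = g^n * ‖x‖^r := by
    intro n x
    rw [norm_smul, htn, Real.mul_rpow (by positivity) (norm_nonneg x), hg, pow_inv_rpow]
  -- key inequality
  have keyB : ∀ x z a : A, ‖f (x + x) z a - (2:ℂ) • f x z a‖ ≤ 2*θ*(‖x‖^r * ‖z‖^r * ‖a‖^r) := by
    intro x z a
    have h := hineq 1 1 1 (by norm_num) (by norm_num) (by norm_num) x x z 0 a 0
    have hxx : (2:ℂ)⁻¹ • (x + x) = x := by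
      rw [← two_smul ℂ x, inv_smul_smul₀ (two_ne_zero (α := ℂ))]
    have hD : D₂ f x x z 0 a 0 = 0 := by
      simp [D₂, hxx, hf0₁, hf0₂, hf0₃]
    rw [hD] at h
    simp only [one_smul, one_mul, mul_one, smul_zero, norm_zero, zero_add, sub_zero, add_zero,
      sub_self, hf0₁, hf0₂, hf0₃, h0r] at h
    have e : θ * (‖x‖^r + ‖x‖^r) * ‖z‖^r * ‖a‖^r = 2*θ*(‖x‖^r * ‖z‖^r * ‖a‖^r) := by ring
    linarith
  have keyB' : ∀ x z a : A, ‖f x z a - (2:ℂ) • f ((2:ℂ)⁻¹ • x) z a‖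
      ≤ 2*θ*g*(‖x‖^r * ‖z‖^r * ‖a‖^r) := by
    intro x z a
    have h := keyB ((2:ℂ)⁻¹ • x) z a
    have e : (2:ℂ)⁻¹ • x + (2:ℂ)⁻¹ • x = x := by
      rw [← two_smul ℂ, smul_smul]; norm_num
    rw [e] at h
    have e2 : ‖(2:ℂ)⁻¹ • x‖^r = g * ‖x‖^r := by
      rw [norm_smul, norm_inv, hnorm2,
        Real.mul_rpow (by positivity) (norm_nonneg x), Real.inv_rpow h2.le, hg]
    rw [e2] at h
    have e3 : 2*θ*(g * ‖x‖^r * ‖z‖^r * ‖a‖^r) = 2*θ*g*(‖x‖^r * ‖z‖^r * ‖a‖^r) := by ring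
    linarith
  -- the approximating sequence
  set Fs : A → A → A → ℕ → B := fun x z a n => (2:ℂ)^n • f (((2:ℂ)^n)⁻¹ • x) z a with hFs
  have hFs0 : ∀ x z a, Fs x z a 0 = f x z a := by intro x z a; simp [hFs]
  have hFdiff : ∀ x z a (n : ℕ), dist (Fs x z a n) (Fs x z a (n+1))
      ≤ (2*θ*g*(‖x‖^r*‖z‖^r*‖a‖^r)) * q^n := by
    intro x z a n
    rw [dist_eq_norm]
    have e : Fs x z a n - Fs x z a (n+1)
        = (2:ℂ)^n • (f (((2:ℂ)^n)⁻¹ • x) z a - (2:ℂ) • f ((2:ℂ)⁻¹ • (((2:ℂ)^n)⁻¹ • x)) z a) := by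
      simp only [hFs, smul_sub, smul_smul, pow_succ, mul_inv_rev]
    rw [e, norm_smul, norm_pow, hnorm2]
    have h := keyB' (((2:ℂ)^n)⁻¹ • x) z a
    rw [hsc n x] at h
    calc (2:ℝ)^n * ‖f (((2:ℂ)^n)⁻¹ • x) z a - (2:ℂ) • f ((2:ℂ)⁻¹ • (((2:ℂ)^n)⁻¹ • x)) z a‖
        ≤ (2:ℝ)^n * (2*θ*g*(g^n * ‖x‖^r * ‖z‖^r * ‖a‖^r)) :=
          mul_le_mul_of_nonneg_left h (by positivity)
      _ = (2*θ*g*(‖x‖^r*‖z‖^r*‖a‖^r)) * q^n := by rw [hqdef, mul_pow]; ring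
  have hcauchy : ∀ x z a, CauchySeq (Fs x z a) := fun x z a =>
    cauchySeq_of_le_geometric q _ hq1 (hFdiff x z a)
  set Hf : A → A → A → B := fun x z a => Filter.limUnder Filter.atTop (Fs x z a) with hHfdef
  have hHt : ∀ x z a, Filter.Tendsto (Fs x z a) Filter.atTop (nhds (Hf x z a)) := fun x z a =>
    (hcauchy x z a).tendsto_limUnder
  have hCeq : ∀ (pr : ℝ), (2*θ*g*pr) / (1 - q) = 2*θ/((2:ℝ)^r - 2) * pr := by
    intro pr
    have hq1' : 1 - q ≠ 0 := by linarith
    rw [hqdef, hg] at *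
    field_simp
  have hHbound : ∀ x z a, ‖f x z a - Hf x z a‖ ≤ 2*θ/((2:ℝ)^r-2) * (‖x‖^r*‖z‖^r*‖a‖^r) := by
    intro x z a
    have h := dist_le_of_le_geometric_of_tendsto₀ q _ hq1 (hFdiff x z a) (hHt x z a)
    rw [hFs0, dist_eq_norm] at h
    calc ‖f x z a - Hf x z a‖ ≤ (2*θ*g*(‖x‖^r*‖z‖^r*‖a‖^r))/(1-q) := h
      _ = _ := hCeq _
  -- shifted convergence
  have hFtshift : ∀ u z a, Filter.Tendsto (fun n => Fs u z a (n+1)) Filter.atTop (nhds (Hf u z a)) :=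
    fun u z a => (hHt u z a).comp (Filter.tendsto_add_atTop_nat 1)
  -- the master inequality for the limit function
  have master : ∀ l m e : ℂ, ‖l‖ = 1 → ‖m‖ = 1 → ‖e‖ = 1 → ∀ x y z w a b : A,
      ‖Hf (l•(x+y)) (m•(z-w)) (e•(a+b)) + Hf (l•(x-y)) (m•(z+w)) (e•(a-b))
        - (l*m*e) • ((2:ℂ)•Hf x z a - (2:ℂ)•Hf x w b + (2:ℂ)•Hf y z b - (2:ℂ)•Hf y w a)‖
      ≤ ‖s‖ * ‖D₁ Hf x y z w a b‖ := by
    intro l m e hl hm he x y z w a b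
    have hstep : ∀ n : ℕ,
        ‖Fs (l•(x+y)) (m•(z-w)) (e•(a+b)) n + Fs (l•(x-y)) (m•(z+w)) (e•(a-b)) n
          - (l*m*e) • ((2:ℂ)•Fs x z a n - (2:ℂ)•Fs x w b n + (2:ℂ)•Fs y z b n - (2:ℂ)•Fs y w a n)‖
        ≤ ‖s‖ * ‖Fs (x+y) (z-w) (a+b) (n+1) + Fs (x-y) (z+w) (a-b) (n+1)
            - (2:ℂ)•Fs x z a n + (2:ℂ)•Fs x w b n - (2:ℂ)•Fs y z b n + (2:ℂ)•Fs y w a n‖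
          + (θ * (‖x‖^r + ‖y‖^r) * (‖z‖^r + ‖w‖^r) * (‖a‖^r + ‖b‖^r)) * q^n := by
      intro n
      have h := hineq l m e hl hm he (((2:ℂ)^n)⁻¹ • x) (((2:ℂ)^n)⁻¹ • y) z w a b
      have ea : l • (((2:ℂ)^n)⁻¹ • x + ((2:ℂ)^n)⁻¹ • y) = ((2:ℂ)^n)⁻¹ • (l • (x+y)) := by
        rw [← smul_add, smul_smul, smul_smul, mul_comm]
      have es : l • (((2:ℂ)^n)⁻¹ • x - ((2:ℂ)^n)⁻¹ • y) = ((2:ℂ)^n)⁻¹ • (l • (x-y)) := by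
        rw [← smul_sub, smul_smul, smul_smul, mul_comm]
      rw [ea, es] at h
      have eL : Fs (l•(x+y)) (m•(z-w)) (e•(a+b)) n + Fs (l•(x-y)) (m•(z+w)) (e•(a-b)) n
          - (l*m*e) • ((2:ℂ)•Fs x z a n - (2:ℂ)•Fs x w b n + (2:ℂ)•Fs y z b n - (2:ℂ)•Fs y w a n)
          = (2:ℂ)^n • (f (((2:ℂ)^n)⁻¹ • (l•(x+y))) (m•(z-w)) (e•(a+b))
              + f (((2:ℂ)^n)⁻¹ • (l•(x-y))) (m•(z+w)) (e•(a-b))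
              - (l*m*e) • ((2:ℂ)•f (((2:ℂ)^n)⁻¹ • x) z a - (2:ℂ)•f (((2:ℂ)^n)⁻¹ • x) w b
                  + (2:ℂ)•f (((2:ℂ)^n)⁻¹ • y) z b - (2:ℂ)•f (((2:ℂ)^n)⁻¹ • y) w a)) := by
        simp only [hFs]
        module
      have e3 : (2:ℂ)⁻¹ • (((2:ℂ)^n)⁻¹ • x + ((2:ℂ)^n)⁻¹ • y) = ((2:ℂ)^(n+1))⁻¹ • (x+y) := by
        rw [← smul_add, smul_smul, pow_succ, mul_inv_rev]
      have e4 : (2:ℂ)⁻¹ • (((2:ℂ)^n)⁻¹ • x - ((2:ℂ)^n)⁻¹ • y) = ((2:ℂ)^(n+1))⁻¹ • (x-y) := by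
        rw [← smul_sub, smul_smul, pow_succ, mul_inv_rev]
      have eR : Fs (x+y) (z-w) (a+b) (n+1) + Fs (x-y) (z+w) (a-b) (n+1)
          - (2:ℂ)•Fs x z a n + (2:ℂ)•Fs x w b n - (2:ℂ)•Fs y z b n + (2:ℂ)•Fs y w a n
          = (2:ℂ)^n • D₂ f (((2:ℂ)^n)⁻¹ • x) (((2:ℂ)^n)⁻¹ • y) z w a b := by
        simp only [D₂, e3, e4, hFs]
        module
      rw [eL, norm_smul, norm_pow, hnorm2, eR]
      calc (2:ℝ)^n * ‖f (((2:ℂ)^n)⁻¹ • (l•(x+y))) (m•(z-w)) (e•(a+b))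
              + f (((2:ℂ)^n)⁻¹ • (l•(x-y))) (m•(z+w)) (e•(a-b))
              - (l*m*e) • ((2:ℂ)•f (((2:ℂ)^n)⁻¹ • x) z a - (2:ℂ)•f (((2:ℂ)^n)⁻¹ • x) w b
                  + (2:ℂ)•f (((2:ℂ)^n)⁻¹ • y) z b - (2:ℂ)•f (((2:ℂ)^n)⁻¹ • y) w a)‖
          ≤ (2:ℝ)^n * (‖s • D₂ f (((2:ℂ)^n)⁻¹ • x) (((2:ℂ)^n)⁻¹ • y) z w a b‖
              + θ * (‖((2:ℂ)^n)⁻¹ • x‖^r + ‖((2:ℂ)^n)⁻¹ • y‖^r) * (‖z‖^r + ‖w‖^r) * (‖a‖^r + ‖b‖^r)) :=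
            mul_le_mul_of_nonneg_left h (by positivity)
        _ = ‖s‖ * ‖(2:ℂ)^n • D₂ f (((2:ℂ)^n)⁻¹ • x) (((2:ℂ)^n)⁻¹ • y) z w a b‖
              + (θ * (‖x‖^r + ‖y‖^r) * (‖z‖^r + ‖w‖^r) * (‖a‖^r + ‖b‖^r)) * q^n := by
            rw [norm_smul s, norm_smul ((2:ℂ)^n), norm_pow, hnorm2, hsc n x, hsc n y, hqdef, mul_pow]
            ring
    have L1 := (hHt (l•(x+y)) (m•(z-w)) (e•(a+b))).add (hHt (l•(x-y)) (m•(z+w)) (e•(a-b)))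
    have L2 := ((hHt x z a).const_smul (2:ℂ)).sub ((hHt x w b).const_smul (2:ℂ))
    have L3 := (L2.add ((hHt y z b).const_smul (2:ℂ))).sub ((hHt y w a).const_smul (2:ℂ))
    have hLlim := (L1.sub (L3.const_smul (l*m*e))).norm
    have hD1lim : Filter.Tendsto (fun n => Fs (x+y) (z-w) (a+b) (n+1) + Fs (x-y) (z+w) (a-b) (n+1)
        - (2:ℂ)•Fs x z a n + (2:ℂ)•Fs x w b n - (2:ℂ)•Fs y z b n + (2:ℂ)•Fs y w a n)
        Filter.atTop (nhds (D₁ Hf x y z w a b)) := by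
      have T1 := (hFtshift (x+y) (z-w) (a+b)).add (hFtshift (x-y) (z+w) (a-b))
      have T2 := T1.sub ((hHt x z a).const_smul (2:ℂ))
      have T3 := T2.add ((hHt x w b).const_smul (2:ℂ))
      have T4 := T3.sub ((hHt y z b).const_smul (2:ℂ))
      have T5 := T4.add ((hHt y w a).const_smul (2:ℂ))
      simpa only [D₁] using T5
    have hRlim := (hD1lim.norm.const_mul ‖s‖).add
      ((tendsto_pow_atTop_nhds_zero_of_lt_one hq0 hq1).const_mul
        (θ * (‖x‖^r + ‖y‖^r) * (‖z‖^r + ‖w‖^r) * (‖a‖^r + ‖b‖^r)))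
    have := le_of_tendsto_of_tendsto' hLlim hRlim hstep
    simpa using this
  -- zero values of Hf
  have hH0₂ : ∀ x a, Hf x 0 a = 0 := by
    intro x a
    refine tendsto_nhds_unique (hHt x 0 a) ?_
    have e : Fs x 0 a = fun _ => (0:B) := by funext n; simp [hFs, hf0₂]
    rw [e]; exact tendsto_const_nhds
  have hH0₁ : ∀ z a, Hf 0 z a = 0 := by
    intro z a
    refine tendsto_nhds_unique (hHt 0 z a) ?_
    have e : Fs 0 z a = fun _ => (0:B) := by funext n; simp [hFs, hf0₁]
    rw [e]; exact tendsto_const_nhds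
  have hH0₃ : ∀ x z, Hf x z 0 = 0 := by
    intro x z
    refine tendsto_nhds_unique (hHt x z 0) ?_
    have e : Fs x z 0 = fun _ => (0:B) := by funext n; simp [hFs, hf0₃]
    rw [e]; exact tendsto_const_nhds
  have hhalfB : ∀ u v : B, u + u = v + v → u = v := by
    intro u v h
    have h2' : (2:ℂ) • u = (2:ℂ) • v := by rw [two_smul, two_smul]; exact h
    exact smul_right_injective B (two_ne_zero (α := ℂ)) h2'
  -- D₁ Hf = 0
  have hD₁H : ∀ x y z w a b : A, D₁ Hf x y z w a b = 0 := by
    intro x y z w a b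
    have h := master 1 1 1 (by norm_num) (by norm_num) (by norm_num) x y z w a b
    simp only [one_smul, one_mul, mul_one] at h
    have e : Hf (x+y) (z-w) (a+b) + Hf (x-y) (z+w) (a-b)
        - ((2:ℂ)•Hf x z a - (2:ℂ)•Hf x w b + (2:ℂ)•Hf y z b - (2:ℂ)•Hf y w a)
        = D₁ Hf x y z w a b := by
      simp only [D₁]; abel
    rw [e] at h
    have hle : ‖D₁ Hf x y z w a b‖ ≤ 0 := by nlinarith [norm_nonneg (D₁ Hf x y z w a b)]
    exact norm_le_zero_iff.mp hle
  -- unit homogeneity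
  have hunit : ∀ l m e : ℂ, ‖l‖ = 1 → ‖m‖ = 1 → ‖e‖ = 1 → ∀ x z a : A,
      Hf (l•x) (m•z) (e•a) = (l*m*e) • Hf x z a := by
    intro l m e hl hm he x z a
    have h := master l m e hl hm he x 0 z 0 a 0
    have hD : D₁ Hf x 0 z 0 a 0 = 0 := by
      simp only [D₁, add_zero, sub_zero, hH0₁, hH0₂, hH0₃, smul_zero]
      rw [two_smul]; abel
    rw [hD] at h
    simp only [add_zero, sub_zero, hH0₁, hH0₂, hH0₃, smul_zero, norm_zero, mul_zero] at h
    have h0 := norm_le_zero_iff.mp h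
    rw [sub_eq_zero] at h0
    apply hhalfB
    rw [h0, smul_comm (l*m*e) (2:ℂ), two_smul]
  -- Jensen equations
  have hJ1 : ∀ x y z a : A, Hf (x+y) z a + Hf (x-y) z a = (2:ℂ) • Hf x z a := by
    intro x y z a
    have h := hD₁H x y z 0 a 0
    simp only [D₁, sub_zero, add_zero, hH0₂, hH0₃, smul_zero] at h
    rwa [sub_eq_zero] at h
  have hJ2 : ∀ x z w a : A, Hf x (z-w) a + Hf x (z+w) a = (2:ℂ) • Hf x z a := by
    intro x z w a
    have h := hD₁H x 0 z w a 0
    simp only [D₁, sub_zero, add_zero, hH0₁, hH0₂, hH0₃, smul_zero] at h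
    rwa [sub_eq_zero] at h
  have hJ3 : ∀ x z a b : A, Hf x z (a+b) + Hf x z (a-b) = (2:ℂ) • Hf x z a := by
    intro x z a b
    have h := hD₁H x 0 z 0 a b
    simp only [D₁, sub_zero, add_zero, hH0₁, hH0₂, hH0₃, smul_zero] at h
    rwa [sub_eq_zero] at h
  -- unit homogeneity per variable
  have hT1 : ∀ l : ℂ, ‖l‖ = 1 → ∀ x z a : A, Hf (l•x) z a = l • Hf x z a := by
    intro l hl x z a
    have := hunit l 1 1 hl (by norm_num) (by norm_num) x z a
    simpa using this
  have hT2 : ∀ l : ℂ, ‖l‖ = 1 → ∀ x z a : A, Hf x (l•z) a = l • Hf x z a := by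
    intro l hl x z a
    have := hunit 1 l 1 (by norm_num) hl (by norm_num) x z a
    simpa using this
  have hT3 : ∀ l : ℂ, ‖l‖ = 1 → ∀ x z a : A, Hf x z (l•a) = l • Hf x z a := by
    intro l hl x z a
    have := hunit 1 1 l (by norm_num) (by norm_num) hl x z a
    simpa using this
  have hneg1 : ∀ x z a : A, Hf (-x) z a = - Hf x z a := by
    intro x z a
    have := hT1 (-1) (by norm_num) x z a
    simpa using this
  have hneg2 : ∀ x z a : A, Hf x (-z) a = - Hf x z a := by
    intro x z a
    have := hT2 (-1) (by norm_num) x z a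
    simpa using this
  have hneg3 : ∀ x z a : A, Hf x z (-a) = - Hf x z a := by
    intro x z a
    have := hT3 (-1) (by norm_num) x z a
    simpa using this
  -- additivity per variable
  have hadd1 : ∀ u v z a : A, Hf (u+v) z a = Hf u z a + Hf v z a := by
    intro u v z a
    have h1 := hJ1 u v z a
    have h2 := hJ1 v u z a
    rw [add_comm v u, show v - u = -(u-v) by abel, hneg1 (u-v) z a] at h2
    apply hhalfB
    calc Hf (u+v) z a + Hf (u+v) z a
        = (Hf (u+v) z a + Hf (u-v) z a) + (Hf (u+v) z a + -Hf (u-v) z a) := by abel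
      _ = (2:ℂ) • Hf u z a + (2:ℂ) • Hf v z a := by rw [h1, h2]
      _ = (Hf u z a + Hf v z a) + (Hf u z a + Hf v z a) := by
          rw [two_smul, two_smul]; abel
  have hadd2 : ∀ x u v a : A, Hf x (u+v) a = Hf x u a + Hf x v a := by
    intro x u v a
    have h1 := hJ2 x u v a
    have h2 := hJ2 x v u a
    rw [add_comm v u, show v - u = -(u-v) by abel, hneg2 x (u-v) a] at h2
    apply hhalfB
    calc Hf x (u+v) a + Hf x (u+v) a
        = (Hf x (u-v) a + Hf x (u+v) a) + (-Hf x (u-v) a + Hf x (u+v) a) := by abel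
      _ = (2:ℂ) • Hf x u a + (2:ℂ) • Hf x v a := by rw [h1, h2]
      _ = (Hf x u a + Hf x v a) + (Hf x u a + Hf x v a) := by
          rw [two_smul, two_smul]; abel
  have hadd3 : ∀ x z u v : A, Hf x z (u+v) = Hf x z u + Hf x z v := by
    intro x z u v
    have h1 := hJ3 x z u v
    have h2 := hJ3 x z v u
    rw [add_comm v u, show v - u = -(u-v) by abel, hneg3 x z (u-v)] at h2
    apply hhalfB
    calc Hf x z (u+v) + Hf x z (u+v)
        = (Hf x z (u+v) + Hf x z (u-v)) + (Hf x z (u+v) + -Hf x z (u-v)) := by abel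
      _ = (2:ℂ) • Hf x z u + (2:ℂ) • Hf x z v := by rw [h1, h2]
      _ = (Hf x z u + Hf x z v) + (Hf x z u + Hf x z v) := by
          rw [two_smul, two_smul]; abel
  -- full ℂ-homogeneity
  have hhom1 : ∀ (c : ℂ) (x z a : A), Hf (c•x) z a = c • Hf x z a := by
    intro c x z a
    exact aux_chom (fun u => Hf u z a) (fun u v => hadd1 u v z a)
      (fun l hl u => hT1 l hl u z a) c x
  have hhom2 : ∀ (c : ℂ) (x z a : A), Hf x (c•z) a = c • Hf x z a := by
    intro c x z a
    exact aux_chom (fun u => Hf x u a) (fun u v => hadd2 x u v a)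
      (fun l hl u => hT2 l hl x u a) c z
  have hhom3 : ∀ (c : ℂ) (x z a : A), Hf x z (c•a) = c • Hf x z a := by
    intro c x z a
    exact aux_chom (fun u => Hf x z u) (fun u v => hadd3 x z u v)
      (fun l hl u => hT3 l hl x z u) c a
  have hCtri : CTrilinear Hf := ⟨⟨hadd1, hadd2, hadd3⟩, hhom1, hhom2, hhom3⟩
  -- uniqueness
  have hC0 : (0:ℝ) ≤ 2*θ/((2:ℝ)^r - 2) := div_nonneg (by linarith) hden.le
  have huniq : ∀ H' : A → A → A → B, CTrilinear H' →
      (∀ x z a : A, ‖f x z a - H' x z a‖ ≤ 2*θ/((2:ℝ)^r-2)*(‖x‖^r*‖z‖^r*‖a‖^r)) →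
      ∀ x z a : A, H' x z a = Hf x z a := by
    intro H' htri hb x z a
    have key : ∀ n : ℕ, ‖H' x z a - Hf x z a‖
        ≤ (2*(2*θ/((2:ℝ)^r-2))*(‖x‖^r*‖z‖^r*‖a‖^r)) * q^n := by
      intro n
      have hpne : ((2:ℂ)^n) ≠ 0 := pow_ne_zero n (two_ne_zero (α := ℂ))
      have e1 : H' x z a = (2:ℂ)^n • H' (((2:ℂ)^n)⁻¹ • x) z a := by
        rw [htri.2.1, smul_smul, mul_inv_cancel₀ hpne, one_smul]
      have e2 : Hf x z a = (2:ℂ)^n • Hf (((2:ℂ)^n)⁻¹ • x) z a := by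
        rw [hhom1, smul_smul, mul_inv_cancel₀ hpne, one_smul]
      rw [e1, e2, ← smul_sub, norm_smul, norm_pow, hnorm2]
      have d1 := hb (((2:ℂ)^n)⁻¹ • x) z a
      have d2 := hHbound (((2:ℂ)^n)⁻¹ • x) z a
      rw [hsc n x] at d1 d2
      have tri : ‖H' (((2:ℂ)^n)⁻¹ • x) z a - Hf (((2:ℂ)^n)⁻¹ • x) z a‖
          ≤ ‖f (((2:ℂ)^n)⁻¹ • x) z a - H' (((2:ℂ)^n)⁻¹ • x) z a‖
            + ‖f (((2:ℂ)^n)⁻¹ • x) z a - Hf (((2:ℂ)^n)⁻¹ • x) z a‖ := by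
        have : H' (((2:ℂ)^n)⁻¹ • x) z a - Hf (((2:ℂ)^n)⁻¹ • x) z a
            = -(f (((2:ℂ)^n)⁻¹ • x) z a - H' (((2:ℂ)^n)⁻¹ • x) z a)
              + (f (((2:ℂ)^n)⁻¹ • x) z a - Hf (((2:ℂ)^n)⁻¹ • x) z a) := by abel
        rw [this]
        refine (norm_add_le _ _).trans ?_
        rw [norm_neg]
      calc (2:ℝ)^n * ‖H' (((2:ℂ)^n)⁻¹ • x) z a - Hf (((2:ℂ)^n)⁻¹ • x) z a‖
          ≤ (2:ℝ)^n * ((2*θ/((2:ℝ)^r-2)*(g^n*‖x‖^r*‖z‖^r*‖a‖^r))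
              + (2*θ/((2:ℝ)^r-2)*(g^n*‖x‖^r*‖z‖^r*‖a‖^r))) :=
            mul_le_mul_of_nonneg_left (tri.trans (add_le_add d1 d2)) (by positivity)
        _ = (2*(2*θ/((2:ℝ)^r-2))*(‖x‖^r*‖z‖^r*‖a‖^r)) * q^n := by
            rw [hqdef, mul_pow]; ring
    have hlim := (tendsto_pow_atTop_nhds_zero_of_lt_one hq0 hq1).const_mul
      (2*(2*θ/((2:ℝ)^r-2))*(‖x‖^r*‖z‖^r*‖a‖^r))
    have hlim0 : Filter.Tendsto (fun n : ℕ => (2*(2*θ/((2:ℝ)^r-2))*(‖x‖^r*‖z‖^r*‖a‖^r)) * q^n)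
        Filter.atTop (nhds 0) := by simpa using hlim
    have h0 : ‖H' x z a - Hf x z a‖ ≤ 0 :=
      le_of_tendsto_of_tendsto' tendsto_const_nhds hlim0 key
    have := norm_le_zero_iff.mp h0
    rwa [sub_eq_zero] at this

  -- final numeric facts for part 2
  have hg3' : g^3 < 1/64 := by
    have h := pow_lt_pow_left₀ hg4 hg0.le (n := 3) (by norm_num)
    have e : (4:ℝ)⁻¹^3 = 1/64 := by norm_num
    linarith [h, e ▸ h]
  have hg30 : (0:ℝ) ≤ g^3 := by positivity
  have hQ1 : 64*g^6 < 1 := by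
    have h1 : g^3*g^3 < (1/64)*(1/64) := mul_lt_mul'' hg3' hg3' hg30 hg30
    have e : (64:ℝ)*g^6 = 64*(g^3*g^3) := by ring
    rw [e]
    linarith
  have hQ2 : 64*g^3 < 1 := by linarith
  have hQσ : 8*g^3 < 1 := by linarith
  have hQ3 : 64*(2:ℝ)⁻¹^3*g^3 < 1 := by
    have e : (64:ℝ)*(2:ℝ)⁻¹^3*g^3 = 8*g^3 := by norm_num
    rw [e]
    exact hQσ
  have hzero_tend : ∀ (d : B) (bnd : ℕ → ℝ), (∀ n, ‖d‖ ≤ bnd n) →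
      Filter.Tendsto bnd Filter.atTop (nhds 0) → d = 0 := by
    intro d bnd hb ht
    exact norm_le_zero_iff.mp (le_of_tendsto_of_tendsto' tendsto_const_nhds ht hb)
  constructor
  · exact ⟨Hf, ⟨hCtri, hHbound⟩,
      fun H' h => funext fun x => funext fun z => funext fun a => huniq H' h.1 h.2 x z a⟩
  · intro hperm hmult H hH
    obtain ⟨hHtri, hHb⟩ := hH
    have hHs3 : ∀ (c : ℂ) (u v w' : A), H (c•u) (c•v) (c•w') = (c*(c*c)) • H u v w' := by
      intro c u v w'
      rw [hHtri.2.1, hHtri.2.2.1, hHtri.2.2.2, smul_smul, smul_smul, mul_assoc]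
    have htn' : ∀ (n:ℕ), ‖((2:ℂ)^n)⁻¹‖ = ((2:ℝ)⁻¹)^n := by
      intro n; rw [htn, inv_pow]
    refine ⟨hHtri, ?_, ?_⟩
    · -- multiplicativity
      intro x y z w a b
      rw [← sub_eq_zero]
      refine hzero_tend _ (fun n : ℕ =>
        (64:ℝ)^n * (
          (2*θ/((2:ℝ)^r-2)) * ((g^n*‖x‖^r*(g^n*‖y‖^r)) * ((g^n*‖z‖^r)*(g^n*‖w‖^r))
            * ((g^n*‖a‖^r)*(g^n*‖b‖^r)))
          + θ * (g^n*‖x‖^r + g^n*‖y‖^r) * (g^n*‖z‖^r + g^n*‖w‖^r) * (g^n*‖a‖^r + g^n*‖b‖^r)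
          + ((2*θ/((2:ℝ)^r-2)) * (g^n*‖x‖^r*(g^n*‖z‖^r)*(g^n*‖a‖^r)))
              * (((2:ℝ)⁻¹^n)^3*‖H y w b‖
                + (2*θ/((2:ℝ)^r-2)) * (g^n*‖y‖^r*(g^n*‖w‖^r)*(g^n*‖b‖^r)))
          + (((2:ℝ)⁻¹^n)^3*‖H x z a‖)
              * ((2*θ/((2:ℝ)^r-2)) * (g^n*‖y‖^r*(g^n*‖w‖^r)*(g^n*‖b‖^r))))) ?_ ?_
      · intro n
        have hpne : ((2:ℂ)^n) ≠ 0 := pow_ne_zero n (two_ne_zero (α := ℂ))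
        have hmulbound : ∀ u v : A,
            ‖(((2:ℂ)^n)⁻¹•u)*(((2:ℂ)^n)⁻¹•v)‖^r ≤ (g^n*‖u‖^r)*(g^n*‖v‖^r) := by
          intro u v
          calc ‖(((2:ℂ)^n)⁻¹•u)*(((2:ℂ)^n)⁻¹•v)‖^r
              ≤ (‖((2:ℂ)^n)⁻¹•u‖*‖((2:ℂ)^n)⁻¹•v‖)^r :=
                Real.rpow_le_rpow (norm_nonneg _) (norm_mul_le _ _) hrpos.le
            _ = ‖((2:ℂ)^n)⁻¹•u‖^r * ‖((2:ℂ)^n)⁻¹•v‖^r :=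
                Real.mul_rpow (norm_nonneg _) (norm_nonneg _)
            _ = (g^n*‖u‖^r)*(g^n*‖v‖^r) := by rw [hsc, hsc]
        have eq1 : H ((((2:ℂ)^n)⁻¹•x)*(((2:ℂ)^n)⁻¹•y)) ((((2:ℂ)^n)⁻¹•z)*(((2:ℂ)^n)⁻¹•w))
              ((((2:ℂ)^n)⁻¹•a)*(((2:ℂ)^n)⁻¹•b))
            = (((2:ℂ)^n)⁻¹)^6 • H (x*y) (z*w) (a*b) := by
          rw [smul_mul_smul_comm, smul_mul_smul_comm, smul_mul_smul_comm, hHs3,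
            show ((((2:ℂ)^n)⁻¹*((2:ℂ)^n)⁻¹)*(((((2:ℂ)^n)⁻¹*((2:ℂ)^n)⁻¹))*((((2:ℂ)^n)⁻¹*((2:ℂ)^n)⁻¹))))
              = (((2:ℂ)^n)⁻¹)^6 from by ring]
        have eq2 : H (((2:ℂ)^n)⁻¹•x) (((2:ℂ)^n)⁻¹•z) (((2:ℂ)^n)⁻¹•a)
              * H (((2:ℂ)^n)⁻¹•y) (((2:ℂ)^n)⁻¹•w) (((2:ℂ)^n)⁻¹•b)
            = (((2:ℂ)^n)⁻¹)^6 • (H x z a * H y w b) := by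
          rw [hHs3, hHs3, smul_mul_smul_comm,
            show ((((2:ℂ)^n)⁻¹*((((2:ℂ)^n)⁻¹)*(((2:ℂ)^n)⁻¹)))*((((2:ℂ)^n)⁻¹*((((2:ℂ)^n)⁻¹)*(((2:ℂ)^n)⁻¹)))))
              = (((2:ℂ)^n)⁻¹)^6 from by ring]
        have e0 : H (x*y) (z*w) (a*b) - H x z a * H y w b
            = ((2:ℂ)^n)^6 • ((((2:ℂ)^n)⁻¹)^6 • (H (x*y) (z*w) (a*b) - H x z a * H y w b)) := by
          rw [smul_smul, ← mul_pow, mul_inv_cancel₀ hpne, one_pow, one_smul]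
        have etriangle : (((2:ℂ)^n)⁻¹)^6 • (H (x*y) (z*w) (a*b) - H x z a * H y w b)
            = (H ((((2:ℂ)^n)⁻¹•x)*(((2:ℂ)^n)⁻¹•y)) ((((2:ℂ)^n)⁻¹•z)*(((2:ℂ)^n)⁻¹•w))
                  ((((2:ℂ)^n)⁻¹•a)*(((2:ℂ)^n)⁻¹•b))
                - f ((((2:ℂ)^n)⁻¹•x)*(((2:ℂ)^n)⁻¹•y)) ((((2:ℂ)^n)⁻¹•z)*(((2:ℂ)^n)⁻¹•w))
                  ((((2:ℂ)^n)⁻¹•a)*(((2:ℂ)^n)⁻¹•b)))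
              + (f ((((2:ℂ)^n)⁻¹•x)*(((2:ℂ)^n)⁻¹•y)) ((((2:ℂ)^n)⁻¹•z)*(((2:ℂ)^n)⁻¹•w))
                  ((((2:ℂ)^n)⁻¹•a)*(((2:ℂ)^n)⁻¹•b))
                - f (((2:ℂ)^n)⁻¹•x) (((2:ℂ)^n)⁻¹•z) (((2:ℂ)^n)⁻¹•a)
                  * f (((2:ℂ)^n)⁻¹•y) (((2:ℂ)^n)⁻¹•w) (((2:ℂ)^n)⁻¹•b))
              + (f (((2:ℂ)^n)⁻¹•x) (((2:ℂ)^n)⁻¹•z) (((2:ℂ)^n)⁻¹•a)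
                  * f (((2:ℂ)^n)⁻¹•y) (((2:ℂ)^n)⁻¹•w) (((2:ℂ)^n)⁻¹•b)
                - H (((2:ℂ)^n)⁻¹•x) (((2:ℂ)^n)⁻¹•z) (((2:ℂ)^n)⁻¹•a)
                  * H (((2:ℂ)^n)⁻¹•y) (((2:ℂ)^n)⁻¹•w) (((2:ℂ)^n)⁻¹•b)) := by
          rw [smul_sub, ← eq1, ← eq2]
          abel
        have hB1 : ‖H ((((2:ℂ)^n)⁻¹•x)*(((2:ℂ)^n)⁻¹•y)) ((((2:ℂ)^n)⁻¹•z)*(((2:ℂ)^n)⁻¹•w))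
              ((((2:ℂ)^n)⁻¹•a)*(((2:ℂ)^n)⁻¹•b))
            - f ((((2:ℂ)^n)⁻¹•x)*(((2:ℂ)^n)⁻¹•y)) ((((2:ℂ)^n)⁻¹•z)*(((2:ℂ)^n)⁻¹•w))
              ((((2:ℂ)^n)⁻¹•a)*(((2:ℂ)^n)⁻¹•b))‖
            ≤ (2*θ/((2:ℝ)^r-2)) * ((g^n*‖x‖^r*(g^n*‖y‖^r)) * ((g^n*‖z‖^r)*(g^n*‖w‖^r))
                * ((g^n*‖a‖^r)*(g^n*‖b‖^r))) := by
          rw [norm_sub_rev]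
          refine (hHb _ _ _).trans ?_
          gcongr
          · exact hmulbound x y
          · exact hmulbound z w
          · exact hmulbound a b
        have hB2 : ‖f ((((2:ℂ)^n)⁻¹•x)*(((2:ℂ)^n)⁻¹•y)) ((((2:ℂ)^n)⁻¹•z)*(((2:ℂ)^n)⁻¹•w))
              ((((2:ℂ)^n)⁻¹•a)*(((2:ℂ)^n)⁻¹•b))
            - f (((2:ℂ)^n)⁻¹•x) (((2:ℂ)^n)⁻¹•z) (((2:ℂ)^n)⁻¹•a)
              * f (((2:ℂ)^n)⁻¹•y) (((2:ℂ)^n)⁻¹•w) (((2:ℂ)^n)⁻¹•b)‖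
            ≤ θ * (g^n*‖x‖^r + g^n*‖y‖^r) * (g^n*‖z‖^r + g^n*‖w‖^r)
              * (g^n*‖a‖^r + g^n*‖b‖^r) := by
          have hp := hmult (((2:ℂ)^n)⁻¹•x) (((2:ℂ)^n)⁻¹•y) (((2:ℂ)^n)⁻¹•z) (((2:ℂ)^n)⁻¹•w)
            (((2:ℂ)^n)⁻¹•a) (((2:ℂ)^n)⁻¹•b)
          simpa only [hsc] using hp
        have hHn1 : ‖H (((2:ℂ)^n)⁻¹•x) (((2:ℂ)^n)⁻¹•z) (((2:ℂ)^n)⁻¹•a)‖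
            = ((2:ℝ)⁻¹^n)^3*‖H x z a‖ := by
          rw [hHs3, norm_smul, norm_mul, norm_mul, htn']
          ring
        have hHn2 : ‖H (((2:ℂ)^n)⁻¹•y) (((2:ℂ)^n)⁻¹•w) (((2:ℂ)^n)⁻¹•b)‖
            = ((2:ℝ)⁻¹^n)^3*‖H y w b‖ := by
          rw [hHs3, norm_smul, norm_mul, norm_mul, htn']
          ring
        have hd1 : ‖f (((2:ℂ)^n)⁻¹•x) (((2:ℂ)^n)⁻¹•z) (((2:ℂ)^n)⁻¹•a)
              - H (((2:ℂ)^n)⁻¹•x) (((2:ℂ)^n)⁻¹•z) (((2:ℂ)^n)⁻¹•a)‖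
            ≤ (2*θ/((2:ℝ)^r-2)) * (g^n*‖x‖^r*(g^n*‖z‖^r)*(g^n*‖a‖^r)) := by
          have hp := hHb (((2:ℂ)^n)⁻¹•x) (((2:ℂ)^n)⁻¹•z) (((2:ℂ)^n)⁻¹•a)
          simpa only [hsc] using hp
        have hd2 : ‖f (((2:ℂ)^n)⁻¹•y) (((2:ℂ)^n)⁻¹•w) (((2:ℂ)^n)⁻¹•b)
              - H (((2:ℂ)^n)⁻¹•y) (((2:ℂ)^n)⁻¹•w) (((2:ℂ)^n)⁻¹•b)‖
            ≤ (2*θ/((2:ℝ)^r-2)) * (g^n*‖y‖^r*(g^n*‖w‖^r)*(g^n*‖b‖^r)) := by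
          have hp := hHb (((2:ℂ)^n)⁻¹•y) (((2:ℂ)^n)⁻¹•w) (((2:ℂ)^n)⁻¹•b)
          simpa only [hsc] using hp
        have hf2 : ‖f (((2:ℂ)^n)⁻¹•y) (((2:ℂ)^n)⁻¹•w) (((2:ℂ)^n)⁻¹•b)‖
            ≤ ((2:ℝ)⁻¹^n)^3*‖H y w b‖
              + (2*θ/((2:ℝ)^r-2)) * (g^n*‖y‖^r*(g^n*‖w‖^r)*(g^n*‖b‖^r)) := by
          have e : f (((2:ℂ)^n)⁻¹•y) (((2:ℂ)^n)⁻¹•w) (((2:ℂ)^n)⁻¹•b)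
              = H (((2:ℂ)^n)⁻¹•y) (((2:ℂ)^n)⁻¹•w) (((2:ℂ)^n)⁻¹•b)
                + (f (((2:ℂ)^n)⁻¹•y) (((2:ℂ)^n)⁻¹•w) (((2:ℂ)^n)⁻¹•b)
                  - H (((2:ℂ)^n)⁻¹•y) (((2:ℂ)^n)⁻¹•w) (((2:ℂ)^n)⁻¹•b)) := by abel
          calc ‖f (((2:ℂ)^n)⁻¹•y) (((2:ℂ)^n)⁻¹•w) (((2:ℂ)^n)⁻¹•b)‖
              ≤ ‖H (((2:ℂ)^n)⁻¹•y) (((2:ℂ)^n)⁻¹•w) (((2:ℂ)^n)⁻¹•b)‖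
                + ‖f (((2:ℂ)^n)⁻¹•y) (((2:ℂ)^n)⁻¹•w) (((2:ℂ)^n)⁻¹•b)
                  - H (((2:ℂ)^n)⁻¹•y) (((2:ℂ)^n)⁻¹•w) (((2:ℂ)^n)⁻¹•b)‖ := by
                rw [e]; exact (norm_add_le _ _).trans (by rw [← e])
            _ ≤ ((2:ℝ)⁻¹^n)^3*‖H y w b‖
                + (2*θ/((2:ℝ)^r-2)) * (g^n*‖y‖^r*(g^n*‖w‖^r)*(g^n*‖b‖^r)) := by
                rw [hHn2]
                exact add_le_add_right hd2 _
        have hB3 : ‖f (((2:ℂ)^n)⁻¹•x) (((2:ℂ)^n)⁻¹•z) (((2:ℂ)^n)⁻¹•a)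
              * f (((2:ℂ)^n)⁻¹•y) (((2:ℂ)^n)⁻¹•w) (((2:ℂ)^n)⁻¹•b)
            - H (((2:ℂ)^n)⁻¹•x) (((2:ℂ)^n)⁻¹•z) (((2:ℂ)^n)⁻¹•a)
              * H (((2:ℂ)^n)⁻¹•y) (((2:ℂ)^n)⁻¹•w) (((2:ℂ)^n)⁻¹•b)‖
            ≤ ((2*θ/((2:ℝ)^r-2)) * (g^n*‖x‖^r*(g^n*‖z‖^r)*(g^n*‖a‖^r)))
                * (((2:ℝ)⁻¹^n)^3*‖H y w b‖
                  + (2*θ/((2:ℝ)^r-2)) * (g^n*‖y‖^r*(g^n*‖w‖^r)*(g^n*‖b‖^r)))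
              + (((2:ℝ)⁻¹^n)^3*‖H x z a‖)
                * ((2*θ/((2:ℝ)^r-2)) * (g^n*‖y‖^r*(g^n*‖w‖^r)*(g^n*‖b‖^r))) := by
          have esplit : f (((2:ℂ)^n)⁻¹•x) (((2:ℂ)^n)⁻¹•z) (((2:ℂ)^n)⁻¹•a)
                * f (((2:ℂ)^n)⁻¹•y) (((2:ℂ)^n)⁻¹•w) (((2:ℂ)^n)⁻¹•b)
              - H (((2:ℂ)^n)⁻¹•x) (((2:ℂ)^n)⁻¹•z) (((2:ℂ)^n)⁻¹•a)
                * H (((2:ℂ)^n)⁻¹•y) (((2:ℂ)^n)⁻¹•w) (((2:ℂ)^n)⁻¹•b)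
              = (f (((2:ℂ)^n)⁻¹•x) (((2:ℂ)^n)⁻¹•z) (((2:ℂ)^n)⁻¹•a)
                  - H (((2:ℂ)^n)⁻¹•x) (((2:ℂ)^n)⁻¹•z) (((2:ℂ)^n)⁻¹•a))
                  * f (((2:ℂ)^n)⁻¹•y) (((2:ℂ)^n)⁻¹•w) (((2:ℂ)^n)⁻¹•b)
                + H (((2:ℂ)^n)⁻¹•x) (((2:ℂ)^n)⁻¹•z) (((2:ℂ)^n)⁻¹•a)
                  * (f (((2:ℂ)^n)⁻¹•y) (((2:ℂ)^n)⁻¹•w) (((2:ℂ)^n)⁻¹•b)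
                    - H (((2:ℂ)^n)⁻¹•y) (((2:ℂ)^n)⁻¹•w) (((2:ℂ)^n)⁻¹•b)) := by
            rw [sub_mul, mul_sub]; abel
          rw [esplit]
          refine (norm_add_le _ _).trans ?_
          refine add_le_add ((norm_mul_le _ _).trans ?_) ((norm_mul_le _ _).trans ?_)
          · exact mul_le_mul hd1 hf2 (norm_nonneg _) (by positivity)
          · rw [hHn1]
            refine mul_le_mul_of_nonneg_left hd2 (by positivity)
        -- assemble
        have hP6 : ((2:ℝ)^n)^6 = (64:ℝ)^n := by
          rw [← pow_mul, mul_comm, pow_mul]; norm_num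
        calc ‖H (x*y) (z*w) (a*b) - H x z a * H y w b‖
            = ((2:ℝ)^n)^6 * ‖(((2:ℂ)^n)⁻¹)^6 • (H (x*y) (z*w) (a*b) - H x z a * H y w b)‖ := by
              conv_lhs => rw [e0]
              rw [norm_smul, norm_pow, norm_pow, hnorm2]
          _ ≤ ((2:ℝ)^n)^6 * (
              (2*θ/((2:ℝ)^r-2)) * ((g^n*‖x‖^r*(g^n*‖y‖^r)) * ((g^n*‖z‖^r)*(g^n*‖w‖^r))
                * ((g^n*‖a‖^r)*(g^n*‖b‖^r)))
              + θ * (g^n*‖x‖^r + g^n*‖y‖^r) * (g^n*‖z‖^r + g^n*‖w‖^r) * (g^n*‖a‖^r + g^n*‖b‖^r)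
              + ((2*θ/((2:ℝ)^r-2)) * (g^n*‖x‖^r*(g^n*‖z‖^r)*(g^n*‖a‖^r)))
                  * (((2:ℝ)⁻¹^n)^3*‖H y w b‖
                    + (2*θ/((2:ℝ)^r-2)) * (g^n*‖y‖^r*(g^n*‖w‖^r)*(g^n*‖b‖^r)))
              + (((2:ℝ)⁻¹^n)^3*‖H x z a‖)
                  * ((2*θ/((2:ℝ)^r-2)) * (g^n*‖y‖^r*(g^n*‖w‖^r)*(g^n*‖b‖^r)))) := by
              refine mul_le_mul_of_nonneg_left ?_ (by positivity)
              rw [etriangle]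
              refine (norm_add₃_le).trans ?_
              calc _ ≤ ((2*θ/((2:ℝ)^r-2)) * ((g^n*‖x‖^r*(g^n*‖y‖^r)) * ((g^n*‖z‖^r)*(g^n*‖w‖^r))
                    * ((g^n*‖a‖^r)*(g^n*‖b‖^r)))
                  + θ * (g^n*‖x‖^r + g^n*‖y‖^r) * (g^n*‖z‖^r + g^n*‖w‖^r)
                    * (g^n*‖a‖^r + g^n*‖b‖^r))
                  + (((2*θ/((2:ℝ)^r-2)) * (g^n*‖x‖^r*(g^n*‖z‖^r)*(g^n*‖a‖^r)))
                    * (((2:ℝ)⁻¹^n)^3*‖H y w b‖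
                      + (2*θ/((2:ℝ)^r-2)) * (g^n*‖y‖^r*(g^n*‖w‖^r)*(g^n*‖b‖^r)))
                    + (((2:ℝ)⁻¹^n)^3*‖H x z a‖)
                      * ((2*θ/((2:ℝ)^r-2)) * (g^n*‖y‖^r*(g^n*‖w‖^r)*(g^n*‖b‖^r)))) :=
                    add_le_add (add_le_add hB1 hB2) hB3
                _ = _ := by ring
          _ = _ := by rw [hP6]
      · -- tendsto of the bound
        have hfe : (fun n : ℕ =>
            (64:ℝ)^n * (
              (2*θ/((2:ℝ)^r-2)) * ((g^n*‖x‖^r*(g^n*‖y‖^r)) * ((g^n*‖z‖^r)*(g^n*‖w‖^r))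
                * ((g^n*‖a‖^r)*(g^n*‖b‖^r)))
              + θ * (g^n*‖x‖^r + g^n*‖y‖^r) * (g^n*‖z‖^r + g^n*‖w‖^r) * (g^n*‖a‖^r + g^n*‖b‖^r)
              + ((2*θ/((2:ℝ)^r-2)) * (g^n*‖x‖^r*(g^n*‖z‖^r)*(g^n*‖a‖^r)))
                  * (((2:ℝ)⁻¹^n)^3*‖H y w b‖
                    + (2*θ/((2:ℝ)^r-2)) * (g^n*‖y‖^r*(g^n*‖w‖^r)*(g^n*‖b‖^r)))
              + (((2:ℝ)⁻¹^n)^3*‖H x z a‖)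
                  * ((2*θ/((2:ℝ)^r-2)) * (g^n*‖y‖^r*(g^n*‖w‖^r)*(g^n*‖b‖^r)))))
            = fun n : ℕ =>
              ((2*θ/((2:ℝ)^r-2)) * (‖x‖^r*‖y‖^r*(‖z‖^r*‖w‖^r)*(‖a‖^r*‖b‖^r))) * (64*g^6)^n
              + (θ*((‖x‖^r+‖y‖^r)*((‖z‖^r+‖w‖^r)*(‖a‖^r+‖b‖^r)))) * (64*g^3)^n
              + ((2*θ/((2:ℝ)^r-2)) * (‖x‖^r*‖z‖^r*‖a‖^r) * ‖H y w b‖) * (64*(2:ℝ)⁻¹^3*g^3)^n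
              + ((2*θ/((2:ℝ)^r-2))^2 * (‖x‖^r*‖z‖^r*‖a‖^r*(‖y‖^r*‖w‖^r*‖b‖^r))) * (64*g^6)^n
              + (‖H x z a‖*(2*θ/((2:ℝ)^r-2))*(‖y‖^r*‖w‖^r*‖b‖^r)) * (64*(2:ℝ)⁻¹^3*g^3)^n := by
          funext n
          rw [show ((64:ℝ)*(2:ℝ)⁻¹^3*g^3)^n = (64:ℝ)^n*((2:ℝ)⁻¹^3)^n*(g^3)^n from by
            rw [mul_pow, mul_pow]]
          rw [show (((2:ℝ)⁻¹^n)^3) = (((2:ℝ)⁻¹^3)^n) from by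
            rw [← pow_mul, ← pow_mul, mul_comm]]
          rw [show ((64:ℝ)*g^6)^n = (64:ℝ)^n*(g^6)^n from by rw [mul_pow]]
          rw [show ((64:ℝ)*g^3)^n = (64:ℝ)^n*(g^3)^n from by rw [mul_pow]]
          ring
        rw [hfe]
        have t1 := (tendsto_pow_atTop_nhds_zero_of_lt_one (by positivity) hQ1).const_mul
          ((2*θ/((2:ℝ)^r-2)) * (‖x‖^r*‖y‖^r*(‖z‖^r*‖w‖^r)*(‖a‖^r*‖b‖^r)))
        have t2 := (tendsto_pow_atTop_nhds_zero_of_lt_one (by positivity) hQ2).const_mul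
          (θ*((‖x‖^r+‖y‖^r)*((‖z‖^r+‖w‖^r)*(‖a‖^r+‖b‖^r))))
        have t3 := (tendsto_pow_atTop_nhds_zero_of_lt_one (by positivity) hQ3).const_mul
          ((2*θ/((2:ℝ)^r-2)) * (‖x‖^r*‖z‖^r*‖a‖^r) * ‖H y w b‖)
        have t4 := (tendsto_pow_atTop_nhds_zero_of_lt_one (by positivity) hQ1).const_mul
          ((2*θ/((2:ℝ)^r-2))^2 * (‖x‖^r*‖z‖^r*‖a‖^r*(‖y‖^r*‖w‖^r*‖b‖^r)))
        have t5 := (tendsto_pow_atTop_nhds_zero_of_lt_one (by positivity) hQ3).const_mul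
          (‖H x z a‖*(2*θ/((2:ℝ)^r-2))*(‖y‖^r*‖w‖^r*‖b‖^r))
        simpa using ((((t1.add t2).add t3).add t4).add t5)
    · -- permutation invariance
      intro σ x
      rw [← sub_eq_zero]
      refine hzero_tend _ (fun n : ℕ => (8:ℝ)^n * (
          (2*θ/((2:ℝ)^r-2)) * (g^n*‖x (σ 0)‖^r*(g^n*‖x (σ 1)‖^r)*(g^n*‖x (σ 2)‖^r))
          + θ * (g^n*‖x 0‖^r) * (g^n*‖x 1‖^r) * (g^n*‖x 2‖^r)
          + (2*θ/((2:ℝ)^r-2)) * (g^n*‖x 0‖^r*(g^n*‖x 1‖^r)*(g^n*‖x 2‖^r)))) ?_ ?_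
      · intro n
        have hpne : ((2:ℂ)^n) ≠ 0 := pow_ne_zero n (two_ne_zero (α := ℂ))
        have hinv3 : ((2:ℂ)^n*((2:ℂ)^n*(2:ℂ)^n))
            * (((2:ℂ)^n)⁻¹*((((2:ℂ)^n)⁻¹)*(((2:ℂ)^n)⁻¹))) = 1 := by
          field_simp
        have e0 : H (x (σ 0)) (x (σ 1)) (x (σ 2)) - H (x 0) (x 1) (x 2)
            = ((2:ℂ)^n*((2:ℂ)^n*(2:ℂ)^n)) • ((((2:ℂ)^n)⁻¹*((((2:ℂ)^n)⁻¹)*(((2:ℂ)^n)⁻¹)))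
              • (H (x (σ 0)) (x (σ 1)) (x (σ 2)) - H (x 0) (x 1) (x 2))) := by
          rw [smul_smul, hinv3, one_smul]
        have em : (((2:ℂ)^n)⁻¹*((((2:ℂ)^n)⁻¹)*(((2:ℂ)^n)⁻¹)))
              • (H (x (σ 0)) (x (σ 1)) (x (σ 2)) - H (x 0) (x 1) (x 2))
            = (H (((2:ℂ)^n)⁻¹ • x (σ 0)) (((2:ℂ)^n)⁻¹ • x (σ 1)) (((2:ℂ)^n)⁻¹ • x (σ 2))
                - f (((2:ℂ)^n)⁻¹ • x (σ 0)) (((2:ℂ)^n)⁻¹ • x (σ 1)) (((2:ℂ)^n)⁻¹ • x (σ 2)))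
              + (f (((2:ℂ)^n)⁻¹ • x (σ 0)) (((2:ℂ)^n)⁻¹ • x (σ 1)) (((2:ℂ)^n)⁻¹ • x (σ 2))
                - f (((2:ℂ)^n)⁻¹ • x 0) (((2:ℂ)^n)⁻¹ • x 1) (((2:ℂ)^n)⁻¹ • x 2))
              + (f (((2:ℂ)^n)⁻¹ • x 0) (((2:ℂ)^n)⁻¹ • x 1) (((2:ℂ)^n)⁻¹ • x 2)
                - H (((2:ℂ)^n)⁻¹ • x 0) (((2:ℂ)^n)⁻¹ • x 1) (((2:ℂ)^n)⁻¹ • x 2)) := by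
          rw [smul_sub, ← hHs3, ← hHs3]
          abel
        have hb1 : ‖H (((2:ℂ)^n)⁻¹ • x (σ 0)) (((2:ℂ)^n)⁻¹ • x (σ 1)) (((2:ℂ)^n)⁻¹ • x (σ 2))
              - f (((2:ℂ)^n)⁻¹ • x (σ 0)) (((2:ℂ)^n)⁻¹ • x (σ 1)) (((2:ℂ)^n)⁻¹ • x (σ 2))‖
            ≤ (2*θ/((2:ℝ)^r-2)) * (g^n*‖x (σ 0)‖^r*(g^n*‖x (σ 1)‖^r)*(g^n*‖x (σ 2)‖^r)) := by
          rw [norm_sub_rev]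
          have hp := hHb (((2:ℂ)^n)⁻¹ • x (σ 0)) (((2:ℂ)^n)⁻¹ • x (σ 1)) (((2:ℂ)^n)⁻¹ • x (σ 2))
          simpa only [hsc] using hp
        have hb2 : ‖f (((2:ℂ)^n)⁻¹ • x (σ 0)) (((2:ℂ)^n)⁻¹ • x (σ 1)) (((2:ℂ)^n)⁻¹ • x (σ 2))
              - f (((2:ℂ)^n)⁻¹ • x 0) (((2:ℂ)^n)⁻¹ • x 1) (((2:ℂ)^n)⁻¹ • x 2)‖
            ≤ θ * (g^n*‖x 0‖^r) * (g^n*‖x 1‖^r) * (g^n*‖x 2‖^r) := by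
          have hp := hperm σ (fun i => ((2:ℂ)^n)⁻¹ • x i)
          simpa only [hsc] using hp
        have hb3 : ‖f (((2:ℂ)^n)⁻¹ • x 0) (((2:ℂ)^n)⁻¹ • x 1) (((2:ℂ)^n)⁻¹ • x 2)
              - H (((2:ℂ)^n)⁻¹ • x 0) (((2:ℂ)^n)⁻¹ • x 1) (((2:ℂ)^n)⁻¹ • x 2)‖
            ≤ (2*θ/((2:ℝ)^r-2)) * (g^n*‖x 0‖^r*(g^n*‖x 1‖^r)*(g^n*‖x 2‖^r)) := by
          have hp := hHb (((2:ℂ)^n)⁻¹ • x 0) (((2:ℂ)^n)⁻¹ • x 1) (((2:ℂ)^n)⁻¹ • x 2)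
          simpa only [hsc] using hp
        have hP3 : (2:ℝ)^n*((2:ℝ)^n*(2:ℝ)^n) = (8:ℝ)^n := by
          rw [← mul_pow, ← mul_pow]; norm_num
        calc ‖H (x (σ 0)) (x (σ 1)) (x (σ 2)) - H (x 0) (x 1) (x 2)‖
            = (2:ℝ)^n*((2:ℝ)^n*(2:ℝ)^n) * ‖(((2:ℂ)^n)⁻¹*((((2:ℂ)^n)⁻¹)*(((2:ℂ)^n)⁻¹)))
              • (H (x (σ 0)) (x (σ 1)) (x (σ 2)) - H (x 0) (x 1) (x 2))‖ := by
              conv_lhs => rw [e0]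
              rw [norm_smul, norm_mul, norm_mul, norm_pow, hnorm2]
          _ ≤ (2:ℝ)^n*((2:ℝ)^n*(2:ℝ)^n) * (
              (2*θ/((2:ℝ)^r-2)) * (g^n*‖x (σ 0)‖^r*(g^n*‖x (σ 1)‖^r)*(g^n*‖x (σ 2)‖^r))
              + θ * (g^n*‖x 0‖^r) * (g^n*‖x 1‖^r) * (g^n*‖x 2‖^r)
              + (2*θ/((2:ℝ)^r-2)) * (g^n*‖x 0‖^r*(g^n*‖x 1‖^r)*(g^n*‖x 2‖^r))) := by
              refine mul_le_mul_of_nonneg_left ?_ (by positivity)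
              rw [em]
              exact (norm_add₃_le).trans (add_le_add (add_le_add hb1 hb2) hb3)
          _ = _ := by rw [hP3]
      · have hfe : (fun n : ℕ => (8:ℝ)^n * (
            (2*θ/((2:ℝ)^r-2)) * (g^n*‖x (σ 0)‖^r*(g^n*‖x (σ 1)‖^r)*(g^n*‖x (σ 2)‖^r))
            + θ * (g^n*‖x 0‖^r) * (g^n*‖x 1‖^r) * (g^n*‖x 2‖^r)
            + (2*θ/((2:ℝ)^r-2)) * (g^n*‖x 0‖^r*(g^n*‖x 1‖^r)*(g^n*‖x 2‖^r))))
            = fun n : ℕ =>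
              ((2*θ/((2:ℝ)^r-2)) * (‖x (σ 0)‖^r*‖x (σ 1)‖^r*‖x (σ 2)‖^r)
                + θ * (‖x 0‖^r*‖x 1‖^r*‖x 2‖^r)
                + (2*θ/((2:ℝ)^r-2)) * (‖x 0‖^r*‖x 1‖^r*‖x 2‖^r)) * (8*g^3)^n := by
          funext n
          ring
        rw [hfe]
        have t := (tendsto_pow_atTop_nhds_zero_of_lt_one (by positivity) hQσ).const_mul
          ((2*θ/((2:ℝ)^r-2)) * (‖x (σ 0)‖^r*‖x (σ 1)‖^r*‖x (σ 2)‖^r)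
            + θ * (‖x 0‖^r*‖x 1‖^r*‖x 2‖^r)
            + (2*θ/((2:ℝ)^r-2)) * (‖x 0‖^r*‖x 1‖^r*‖x 2‖^r))
        simpa using t
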